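/- Let (E_i, ρ_i), i = 1,2, be q-matroids, E = E_1 ⊕ E_2 with projections π_i : E → E_i, and ρ'_i(V) = ρ_i(π_i(V)) for subspaces V of E. Define ρ(V) = dim V + min over all subspaces X ≤ V of (ρ'_1(X) + ρ'_2(X) − dim X). Then (E, ρ) is a q-matroid, i.e. ρ satisfies (R1) 0 ≤ ρ(V) ≤ dim V, (R2) ρ(V) ≤ ρ(W) whenever V ≤ W, and (R3) ρ(V+W) + ρ(V∩W) ≤ ρ(V) + ρ(W). -/
import Mathlib

open Module

/-- The rank function of the direct sum of two q-matroids `(E₁, ρ₁)`, `(E₂, ρ₂)` on the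
ground space `E₁ × E₂`, as an integer:
`ρ(V) = dim V + min_{X ≤ V} (ρ₁(π₁(X)) + ρ₂(π₂(X)) − dim X)`. -/
noncomputable def dsRank {Fq E₁ E₂ : Type*} [Field Fq]
    [AddCommGroup E₁] [Module Fq E₁] [AddCommGroup E₂] [Module Fq E₂]
    (ρ₁ : Submodule Fq E₁ → ℕ) (ρ₂ : Submodule Fq E₂ → ℕ)
    (V : Submodule Fq (E₁ × E₂)) : ℤ :=
  (finrank Fq V : ℤ) +
    sInf {z : ℤ | ∃ X : Submodule Fq (E₁ × E₂), X ≤ V ∧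
      z = (ρ₁ (X.map (LinearMap.fst Fq E₁ E₂)) : ℤ) + (ρ₂ (X.map (LinearMap.snd Fq E₁ E₂)) : ℤ)
            - (finrank Fq X : ℤ)}

section Aux

variable {Fq E₁ E₂ : Type*} [Field Fq]
    [AddCommGroup E₁] [Module Fq E₁] [FiniteDimensional Fq E₁]
    [AddCommGroup E₂] [Module Fq E₂] [FiniteDimensional Fq E₂]
    (ρ₁ : Submodule Fq E₁ → ℕ) (ρ₂ : Submodule Fq E₂ → ℕ)

/-- The "correction" function `F(X) = ρ₁(π₁ X) + ρ₂(π₂ X) − dim X`. -/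
noncomputable def dsF (X : Submodule Fq (E₁ × E₂)) : ℤ :=
  (ρ₁ (X.map (LinearMap.fst Fq E₁ E₂)) : ℤ) + (ρ₂ (X.map (LinearMap.snd Fq E₁ E₂)) : ℤ)
    - (finrank Fq X : ℤ)

/-- The set over which the infimum in `dsRank` is taken. -/
def dsSet (V : Submodule Fq (E₁ × E₂)) : Set ℤ :=
  {z : ℤ | ∃ X : Submodule Fq (E₁ × E₂), X ≤ V ∧ z = dsF ρ₁ ρ₂ X}

lemma dsRank_eq (V : Submodule Fq (E₁ × E₂)) :
    dsRank ρ₁ ρ₂ V = (finrank Fq V : ℤ) + sInf (dsSet ρ₁ ρ₂ V) := rfl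

lemma dsSet_nonempty (V : Submodule Fq (E₁ × E₂)) : (dsSet ρ₁ ρ₂ V).Nonempty :=
  ⟨dsF ρ₁ ρ₂ ⊥, ⊥, bot_le, rfl⟩

lemma dsSet_bddBelow (V : Submodule Fq (E₁ × E₂)) : BddBelow (dsSet ρ₁ ρ₂ V) := by
  refine ⟨-(finrank Fq V : ℤ), fun z hz => ?_⟩
  obtain ⟨X, hXV, rfl⟩ := hz
  have h1 : finrank Fq X ≤ finrank Fq V := Submodule.finrank_mono hXV
  have h2 : (0 : ℤ) ≤ (ρ₁ (X.map (LinearMap.fst Fq E₁ E₂)) : ℤ) := Int.ofNat_nonneg _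
  have h3 : (0 : ℤ) ≤ (ρ₂ (X.map (LinearMap.snd Fq E₁ E₂)) : ℤ) := Int.ofNat_nonneg _
  unfold dsF
  omega

lemma dsSet_sInf_le {V X : Submodule Fq (E₁ × E₂)} (hXV : X ≤ V) :
    sInf (dsSet ρ₁ ρ₂ V) ≤ dsF ρ₁ ρ₂ X :=
  csInf_le (dsSet_bddBelow ρ₁ ρ₂ V) ⟨X, hXV, rfl⟩

lemma dsSet_sInf_mem (V : Submodule Fq (E₁ × E₂)) :
    sInf (dsSet ρ₁ ρ₂ V) ∈ dsSet ρ₁ ρ₂ V :=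
  Int.csInf_mem (dsSet_nonempty ρ₁ ρ₂ V) (dsSet_bddBelow ρ₁ ρ₂ V)

end Aux

/-- The direct sum rank function `ρ` of two q-matroids `(E₁, ρ₁)` and
`(E₂, ρ₂)` is a q-matroid rank function on `E = E₁ ⊕ E₂`: it satisfies
(R1) `0 ≤ ρ(V) ≤ dim V`, (R2) monotonicity, and (R3) submodularity. -/
theorem stmt6 (Fq E₁ E₂ : Type*) [Field Fq] [Fintype Fq]
    [AddCommGroup E₁] [Module Fq E₁] [FiniteDimensional Fq E₁]
    [AddCommGroup E₂] [Module Fq E₂] [FiniteDimensional Fq E₂]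
    (ρ₁ : Submodule Fq E₁ → ℕ) (ρ₂ : Submodule Fq E₂ → ℕ)
    (hR1₁ : ∀ V : Submodule Fq E₁, ρ₁ V ≤ finrank Fq V)
    (hR2₁ : ∀ V W : Submodule Fq E₁, V ≤ W → ρ₁ V ≤ ρ₁ W)
    (hR3₁ : ∀ V W : Submodule Fq E₁, ρ₁ (V ⊔ W) + ρ₁ (V ⊓ W) ≤ ρ₁ V + ρ₁ W)
    (hR1₂ : ∀ V : Submodule Fq E₂, ρ₂ V ≤ finrank Fq V)
    (hR2₂ : ∀ V W : Submodule Fq E₂, V ≤ W → ρ₂ V ≤ ρ₂ W)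
    (hR3₂ : ∀ V W : Submodule Fq E₂, ρ₂ (V ⊔ W) + ρ₂ (V ⊓ W) ≤ ρ₂ V + ρ₂ W) :
    (∀ V : Submodule Fq (E₁ × E₂),
        0 ≤ dsRank ρ₁ ρ₂ V ∧ dsRank ρ₁ ρ₂ V ≤ (finrank Fq V : ℤ)) ∧
    (∀ V W : Submodule Fq (E₁ × E₂), V ≤ W → dsRank ρ₁ ρ₂ V ≤ dsRank ρ₁ ρ₂ W) ∧
    (∀ V W : Submodule Fq (E₁ × E₂),
        dsRank ρ₁ ρ₂ (V ⊔ W) + dsRank ρ₁ ρ₂ (V ⊓ W) ≤ dsRank ρ₁ ρ₂ V + dsRank ρ₁ ρ₂ W) := by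
  -- basic facts
  have hbot : dsF ρ₁ ρ₂ (⊥ : Submodule Fq (E₁ × E₂)) = 0 := by
    have h1 : ρ₁ (⊥ : Submodule Fq E₁) = 0 := by
      have := hR1₁ ⊥
      simp [finrank_bot] at this
      omega
    have h2 : ρ₂ (⊥ : Submodule Fq E₂) = 0 := by
      have := hR1₂ ⊥
      simp [finrank_bot] at this
      omega
    simp [dsF, Submodule.map_bot, h1, h2, finrank_bot]
  refine ⟨?_, ?_, ?_⟩
  · -- (R1)
    intro V
    constructor
    · rw [dsRank_eq]
      have h : (-(finrank Fq V : ℤ)) ≤ sInf (dsSet ρ₁ ρ₂ V) := by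
        apply le_csInf (dsSet_nonempty ρ₁ ρ₂ V)
        rintro z ⟨X, hXV, rfl⟩
        have h1 : finrank Fq X ≤ finrank Fq V := Submodule.finrank_mono hXV
        have h2 : (0 : ℤ) ≤ (ρ₁ (X.map (LinearMap.fst Fq E₁ E₂)) : ℤ) := Int.ofNat_nonneg _
        have h3 : (0 : ℤ) ≤ (ρ₂ (X.map (LinearMap.snd Fq E₁ E₂)) : ℤ) := Int.ofNat_nonneg _
        unfold dsF
        omega
      omega
    · rw [dsRank_eq]
      have h := dsSet_sInf_le ρ₁ ρ₂ (bot_le : (⊥ : Submodule Fq (E₁ × E₂)) ≤ V)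
      rw [hbot] at h
      omega
  · -- (R2)
    intro V W hVW
    rw [dsRank_eq, dsRank_eq]
    obtain ⟨X, hXW, hX⟩ := dsSet_sInf_mem ρ₁ ρ₂ W
    have hle : sInf (dsSet ρ₁ ρ₂ V) ≤ dsF ρ₁ ρ₂ (X ⊓ V) :=
      dsSet_sInf_le ρ₁ ρ₂ inf_le_right
    -- key inequality : finrank V + dsF (X ⊓ V) ≤ finrank W + dsF X
    have hdim : finrank Fq ↥(X ⊔ V) + finrank Fq ↥(X ⊓ V) = finrank Fq X + finrank Fq V :=
      Submodule.finrank_sup_add_finrank_inf_eq X V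
    have hsup : finrank Fq ↥(X ⊔ V) ≤ finrank Fq W :=
      Submodule.finrank_mono (sup_le hXW hVW)
    have hr1 : ρ₁ ((X ⊓ V).map (LinearMap.fst Fq E₁ E₂)) ≤
        ρ₁ (X.map (LinearMap.fst Fq E₁ E₂)) :=
      hR2₁ _ _ (Submodule.map_mono inf_le_left)
    have hr2 : ρ₂ ((X ⊓ V).map (LinearMap.snd Fq E₁ E₂)) ≤
        ρ₂ (X.map (LinearMap.snd Fq E₁ E₂)) :=
      hR2₂ _ _ (Submodule.map_mono inf_le_left)
    have key : (finrank Fq V : ℤ) + dsF ρ₁ ρ₂ (X ⊓ V) ≤ (finrank Fq W : ℤ) + dsF ρ₁ ρ₂ X := by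
      unfold dsF
      push_cast
      omega
    rw [hX]
    omega
  · -- (R3)
    intro V W
    rw [dsRank_eq, dsRank_eq, dsRank_eq, dsRank_eq]
    obtain ⟨X, hXV, hX⟩ := dsSet_sInf_mem ρ₁ ρ₂ V
    obtain ⟨Y, hYW, hY⟩ := dsSet_sInf_mem ρ₁ ρ₂ W
    have hle1 : sInf (dsSet ρ₁ ρ₂ (V ⊔ W)) ≤ dsF ρ₁ ρ₂ (X ⊔ Y) :=
      dsSet_sInf_le ρ₁ ρ₂ (sup_le_sup hXV hYW)
    have hle2 : sInf (dsSet ρ₁ ρ₂ (V ⊓ W)) ≤ dsF ρ₁ ρ₂ (X ⊓ Y) :=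
      dsSet_sInf_le ρ₁ ρ₂ (inf_le_inf hXV hYW)
    have hdimXY : finrank Fq ↥(X ⊔ Y) + finrank Fq ↥(X ⊓ Y) = finrank Fq X + finrank Fq Y :=
      Submodule.finrank_sup_add_finrank_inf_eq X Y
    have hdimVW : finrank Fq ↥(V ⊔ W) + finrank Fq ↥(V ⊓ W) = finrank Fq V + finrank Fq W :=
      Submodule.finrank_sup_add_finrank_inf_eq V W
    -- ρ₁ part
    have hρ1 : ρ₁ ((X ⊔ Y).map (LinearMap.fst Fq E₁ E₂)) +
        ρ₁ ((X ⊓ Y).map (LinearMap.fst Fq E₁ E₂)) ≤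
        ρ₁ (X.map (LinearMap.fst Fq E₁ E₂)) + ρ₁ (Y.map (LinearMap.fst Fq E₁ E₂)) := by
      have h1 : (X ⊔ Y).map (LinearMap.fst Fq E₁ E₂) =
          X.map (LinearMap.fst Fq E₁ E₂) ⊔ Y.map (LinearMap.fst Fq E₁ E₂) :=
        Submodule.map_sup X Y _
      have h2 : ρ₁ ((X ⊓ Y).map (LinearMap.fst Fq E₁ E₂)) ≤
          ρ₁ (X.map (LinearMap.fst Fq E₁ E₂) ⊓ Y.map (LinearMap.fst Fq E₁ E₂)) :=
        hR2₁ _ _ (Submodule.map_inf_le _)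
      calc ρ₁ ((X ⊔ Y).map (LinearMap.fst Fq E₁ E₂)) +
            ρ₁ ((X ⊓ Y).map (LinearMap.fst Fq E₁ E₂))
          ≤ ρ₁ (X.map (LinearMap.fst Fq E₁ E₂) ⊔ Y.map (LinearMap.fst Fq E₁ E₂)) +
            ρ₁ (X.map (LinearMap.fst Fq E₁ E₂) ⊓ Y.map (LinearMap.fst Fq E₁ E₂)) := by
            rw [h1]; omega
        _ ≤ _ := hR3₁ _ _
    have hρ2 : ρ₂ ((X ⊔ Y).map (LinearMap.snd Fq E₁ E₂)) +
        ρ₂ ((X ⊓ Y).map (LinearMap.snd Fq E₁ E₂)) ≤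
        ρ₂ (X.map (LinearMap.snd Fq E₁ E₂)) + ρ₂ (Y.map (LinearMap.snd Fq E₁ E₂)) := by
      have h1 : (X ⊔ Y).map (LinearMap.snd Fq E₁ E₂) =
          X.map (LinearMap.snd Fq E₁ E₂) ⊔ Y.map (LinearMap.snd Fq E₁ E₂) :=
        Submodule.map_sup X Y _
      have h2 : ρ₂ ((X ⊓ Y).map (LinearMap.snd Fq E₁ E₂)) ≤
          ρ₂ (X.map (LinearMap.snd Fq E₁ E₂) ⊓ Y.map (LinearMap.snd Fq E₁ E₂)) :=
        hR2₂ _ _ (Submodule.map_inf_le _)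
      calc ρ₂ ((X ⊔ Y).map (LinearMap.snd Fq E₁ E₂)) +
            ρ₂ ((X ⊓ Y).map (LinearMap.snd Fq E₁ E₂))
          ≤ ρ₂ (X.map (LinearMap.snd Fq E₁ E₂) ⊔ Y.map (LinearMap.snd Fq E₁ E₂)) +
            ρ₂ (X.map (LinearMap.snd Fq E₁ E₂) ⊓ Y.map (LinearMap.snd Fq E₁ E₂)) := by
            rw [h1]; omega
        _ ≤ _ := hR3₂ _ _
    have key : dsF ρ₁ ρ₂ (X ⊔ Y) + dsF ρ₁ ρ₂ (X ⊓ Y) ≤ dsF ρ₁ ρ₂ X + dsF ρ₁ ρ₂ Y := by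
      unfold dsF
      push_cast
      omega
    rw [hX, hY]
    omega
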